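/- arXiv:1606.01317 — 5 statements merged into one kernel-verified Lean document; each statement's English description precedes it below -/
import Mathlib

section
/- For every μ with 1/2 < μ ≤ 1, there exists a unique function h : [0,1] → [0,1] satisfying h(x) = (1/2)·h(2μx) for 0 ≤ x ≤ 1/2 and h(x) = 1 − (1/2)·h(2μ(1−x)) for 1/2 < x ≤ 1; moreover, this function satisfies the commutation relation T(h(x)) = h(T_μ(x)) for all x ∈ [0,1]. -/
open Set

/-- The symmetric tent map of height `μ`:
`T_μ(x) = 2μx` for `x ≤ 1/2` and `T_μ(x) = 2μ(1−x)` for `x > 1/2`. -/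
noncomputable def tentMap (μ : ℝ) (x : ℝ) : ℝ :=
  if x ≤ 1/2 then 2*μ*x else 2*μ*(1-x)

/-- `h : [0,1] → [0,1]` satisfies the commuter functional equation for `T_μ`:
`h(x) = ½ h(2μx)` for `0 ≤ x ≤ 1/2` and `h(x) = 1 − ½ h(2μ(1−x))` for `1/2 < x ≤ 1`. -/
def IsCommuter (μ : ℝ) (h : ℝ → ℝ) : Prop :=
  (∀ x ∈ Icc (0:ℝ) 1, h x ∈ Icc (0:ℝ) 1) ∧
  (∀ x : ℝ, 0 ≤ x → x ≤ 1/2 → h x = (1/2) * h (2*μ*x)) ∧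
  (∀ x : ℝ, 1/2 < x → x ≤ 1 → h x = 1 - (1/2) * h (2*μ*(1-x)))

noncomputable def cSeq (μ : ℝ) : ℕ → ℝ → ℝ
  | 0 => fun x => if x ≤ 1/2 then 0 else 1
  | n+1 => fun x => (if x ≤ 1/2 then (1:ℝ) else -1) * (1/2 * cSeq μ n (tentMap μ x))

lemma abs_cSeq_le (μ : ℝ) : ∀ n x, |cSeq μ n x| ≤ (1/2)^n := by
  intro n
  induction n with
  | zero => intro x; simp only [cSeq, pow_zero]; split <;> norm_num
  | succ n ih =>
    intro x
    simp only [cSeq]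
    rw [abs_mul, abs_mul]
    have h1 : |if x ≤ 1/2 then (1:ℝ) else -1| = 1 := by split <;> norm_num
    rw [h1, one_mul]
    have := ih (tentMap μ x)
    rw [pow_succ]
    have h2 : |(1/2 : ℝ)| = 1/2 := by norm_num
    rw [h2]
    nlinarith [abs_nonneg (cSeq μ n (tentMap μ x))]

lemma summable_cSeq (μ x : ℝ) : Summable (fun n => cSeq μ n x) := by
  apply Summable.of_abs
  exact Summable.of_nonneg_of_le (fun n => abs_nonneg _) (fun n => abs_cSeq_le μ n x)
    summable_geometric_two

noncomputable def hFun (μ : ℝ) (x : ℝ) : ℝ := ∑' n, cSeq μ n x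

lemma abs_hFun_le (μ x : ℝ) : |hFun μ x| ≤ 2 := by
  have h1 : |hFun μ x| ≤ ∑' n, |cSeq μ n x| := by
    have := norm_tsum_le_tsum_norm (f := fun n => cSeq μ n x)
      (by simpa [Real.norm_eq_abs] using (summable_cSeq μ x).abs)
    simpa [Real.norm_eq_abs, hFun] using this
  have h2 : ∑' n, |cSeq μ n x| ≤ ∑' n, (1/2 : ℝ)^n := by
    apply Summable.tsum_le_tsum (fun n => abs_cSeq_le μ n x)
      ((summable_cSeq μ x).abs) summable_geometric_two
  have h3 : ∑' n, (1/2 : ℝ)^n = 2 := tsum_geometric_two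
  linarith

lemma hFun_eq_left (μ : ℝ) (x : ℝ) (hx : x ≤ 1/2) :
    hFun μ x = (1/2) * hFun μ (2*μ*x) := by
  have hT : tentMap μ x = 2*μ*x := if_pos hx
  have h0 : cSeq μ 0 x = 0 := if_pos hx
  have hstep : ∀ n, cSeq μ (n+1) x = 1/2 * cSeq μ n (2*μ*x) := by
    intro n
    simp only [cSeq, if_pos hx, hT, one_mul]
  calc hFun μ x = cSeq μ 0 x + ∑' n, cSeq μ (n+1) x :=
        Summable.tsum_eq_zero_add (summable_cSeq μ x)
    _ = ∑' n, 1/2 * cSeq μ n (2*μ*x) := by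
        rw [h0, zero_add]; exact tsum_congr hstep
    _ = (1/2) * hFun μ (2*μ*x) := tsum_mul_left

lemma hFun_eq_right (μ : ℝ) (x : ℝ) (hx : ¬ x ≤ 1/2) :
    hFun μ x = 1 - (1/2) * hFun μ (2*μ*(1-x)) := by
  have hT : tentMap μ x = 2*μ*(1-x) := if_neg hx
  have h0 : cSeq μ 0 x = 1 := if_neg hx
  have hstep : ∀ n, cSeq μ (n+1) x = -(1/2 * cSeq μ n (2*μ*(1-x))) := by
    intro n
    simp only [cSeq, if_neg hx, hT]
    ring
  calc hFun μ x = cSeq μ 0 x + ∑' n, cSeq μ (n+1) x :=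
        Summable.tsum_eq_zero_add (summable_cSeq μ x)
    _ = 1 + ∑' n, -(1/2 * cSeq μ n (2*μ*(1-x))) := by
        rw [h0]; congr 1; exact tsum_congr hstep
    _ = 1 + -(∑' n, 1/2 * cSeq μ n (2*μ*(1-x))) := by rw [tsum_neg]
    _ = 1 - (1/2) * hFun μ (2*μ*(1-x)) := by
        simp only [hFun]
        rw [tsum_mul_left]
        ring

lemma aux_le (c r : ℝ) (hc : 0 < c) (h : ∀ N : ℕ, r ≤ c * (1/2)^N) : r ≤ 0 := by
  by_contra hr
  push_neg at hr
  obtain ⟨N, hN⟩ := exists_pow_lt_of_lt_one (div_pos hr hc) (by norm_num : (1/2:ℝ) < 1)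
  have := h N
  rw [lt_div_iff₀ hc] at hN
  nlinarith

lemma tentMap_mem (μ : ℝ) (hμ0 : 0 < μ) (hμ2 : μ ≤ 1) {x : ℝ} (hx : x ∈ Icc (0:ℝ) 1) :
    tentMap μ x ∈ Icc (0:ℝ) 1 := by
  obtain ⟨hx0, hx1⟩ := hx
  unfold tentMap
  split
  · constructor <;> nlinarith
  · constructor <;> nlinarith

lemma hFun_mem (μ : ℝ) (hμ0 : 0 < μ) (hμ2 : μ ≤ 1) :
    ∀ x ∈ Icc (0:ℝ) 1, hFun μ x ∈ Icc (0:ℝ) 1 := by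
  have key : ∀ N : ℕ, ∀ x ∈ Icc (0:ℝ) 1,
      -(2*(1/2)^N) ≤ hFun μ x ∧ hFun μ x ≤ 1 + 2*(1/2)^N := by
    intro N
    induction N with
    | zero =>
      intro x _
      have := abs_hFun_le μ x
      rw [abs_le] at this
      simp only [pow_zero, mul_one]
      exact ⟨by linarith [this.1], by linarith [this.2]⟩
    | succ N ih =>
      intro x hx
      by_cases hhalf : x ≤ 1/2
      · have hy : (2*μ*x) ∈ Icc (0:ℝ) 1 := by
          constructor <;> nlinarith [hx.1, hx.2]
        have hv := ih _ hy
        have heq := hFun_eq_left μ x hhalf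
        rw [heq, pow_succ]
        constructor <;> nlinarith [hv.1, hv.2]
      · have hy : (2*μ*(1-x)) ∈ Icc (0:ℝ) 1 := by
          push_neg at hhalf
          constructor <;> nlinarith [hx.1, hx.2]
        have hv := ih _ hy
        have heq := hFun_eq_right μ x hhalf
        rw [heq, pow_succ]
        constructor <;> nlinarith [hv.1, hv.2]
  intro x hx
  constructor
  · have : -hFun μ x ≤ 0 := by
      apply aux_le 2 _ (by norm_num)
      intro N
      linarith [(key N x hx).1]
    linarith
  · have : hFun μ x - 1 ≤ 0 := by
      apply aux_le 2 _ (by norm_num)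
      intro N
      linarith [(key N x hx).2]
    linarith

lemma commuter_unique (μ : ℝ) (hμ0 : 0 < μ) (hμ2 : μ ≤ 1) (h h' : ℝ → ℝ)
    (hh : IsCommuter μ h) (hh' : IsCommuter μ h') :
    ∀ x ∈ Icc (0:ℝ) 1, h x = h' x := by
  obtain ⟨hr, h1, h2⟩ := hh
  obtain ⟨hr', h1', h2'⟩ := hh'
  have key : ∀ N : ℕ, ∀ x ∈ Icc (0:ℝ) 1, |h x - h' x| ≤ (1/2)^N := by
    intro N
    induction N with
    | zero =>
      intro x hx
      have a := hr x hx
      have b := hr' x hx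
      simp only [pow_zero]
      rw [abs_le]
      exact ⟨by linarith [a.1, b.2], by linarith [a.2, b.1]⟩
    | succ N ih =>
      intro x hx
      by_cases hhalf : x ≤ 1/2
      · have hy : (2*μ*x) ∈ Icc (0:ℝ) 1 := by
          constructor <;> nlinarith [hx.1, hx.2]
        have := ih _ hy
        have e : (1/2) * h (2*μ*x) - (1/2) * h' (2*μ*x)
            = 1/2 * (h (2*μ*x) - h' (2*μ*x)) := by ring
        rw [h1 x hx.1 hhalf, h1' x hx.1 hhalf, e, abs_mul,
          abs_of_nonneg (by norm_num : (0:ℝ) ≤ 1/2), pow_succ]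
        nlinarith
      · push_neg at hhalf
        have hy : (2*μ*(1-x)) ∈ Icc (0:ℝ) 1 := by
          constructor <;> nlinarith [hx.1, hx.2]
        have hb := ih _ hy
        have e : (1 - 1/2 * h (2*μ*(1-x))) - (1 - 1/2 * h' (2*μ*(1-x)))
            = 1/2 * (h' (2*μ*(1-x)) - h (2*μ*(1-x))) := by ring
        rw [h2 x hhalf hx.2, h2' x hhalf hx.2, e, abs_mul,
          abs_of_nonneg (by norm_num : (0:ℝ) ≤ 1/2), pow_succ]
        rw [abs_sub_comm] at hb
        nlinarith
  intro x hx
  have : |h x - h' x| ≤ 0 := by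
    apply aux_le 1 _ (by norm_num)
    intro N
    simpa using key N x hx
  have := abs_nonneg (h x - h' x)
  have : |h x - h' x| = 0 := le_antisymm ‹|h x - h' x| ≤ 0› this
  rw [abs_eq_zero] at this
  linarith

lemma commuter_commutes (μ : ℝ) (hμ0 : 0 < μ) (hμ2 : μ ≤ 1) (h : ℝ → ℝ)
    (hh : IsCommuter μ h) : ∀ x ∈ Icc (0:ℝ) 1, tentMap 1 (h x) = h (tentMap μ x) := by
  obtain ⟨hr, h1, h2⟩ := hh
  intro x hx
  by_cases hhalf : x ≤ 1/2
  · have hy : (2*μ*x) ∈ Icc (0:ℝ) 1 := by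
      constructor <;> nlinarith [hx.1, hx.2]
    have hv := hr _ hy
    have heq := h1 x hx.1 hhalf
    have hT : tentMap μ x = 2*μ*x := if_pos hhalf
    have hle : h x ≤ 1/2 := by rw [heq]; linarith [hv.2]
    rw [hT]
    unfold tentMap
    rw [if_pos hle, heq]
    ring
  · push_neg at hhalf
    have hy : (2*μ*(1-x)) ∈ Icc (0:ℝ) 1 := by
      constructor <;> nlinarith [hx.1, hx.2]
    have hv := hr _ hy
    have heq := h2 x hhalf hx.2
    have hT : tentMap μ x = 2*μ*(1-x) := if_neg (not_le.mpr hhalf)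
    rw [hT]
    unfold tentMap
    by_cases hle : h x ≤ 1/2
    · rw [if_pos hle]
      have hy1 : h (2*μ*(1-x)) = 1 := by
        have : 1 ≤ h (2*μ*(1-x)) := by rw [heq] at hle; linarith
        linarith [hv.2]
      rw [heq, hy1]; ring
    · rw [if_neg hle, heq]; ring

/-- For `1/2 < μ ≤ 1` there is a function `h : [0,1] → [0,1]` satisfying the commuter
functional equation, it is unique (as a function on `[0,1]`), and any such function
satisfies the commutation relation `T(h(x)) = h(T_μ(x))` on `[0,1]`. -/
theorem exists_unique_commuter (μ : ℝ) (hμ1 : 1/2 < μ) (hμ2 : μ ≤ 1) :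
    (∃ h : ℝ → ℝ, IsCommuter μ h ∧
      ∀ h' : ℝ → ℝ, IsCommuter μ h' → ∀ x ∈ Icc (0:ℝ) 1, h' x = h x) ∧
    (∀ h : ℝ → ℝ, IsCommuter μ h →
      ∀ x ∈ Icc (0:ℝ) 1, tentMap 1 (h x) = h (tentMap μ x)) := by
  have hμ0 : 0 < μ := by linarith
  have hcom : IsCommuter μ (hFun μ) := by
    refine ⟨hFun_mem μ hμ0 hμ2, fun x _ hx => hFun_eq_left μ x hx,
      fun x hx _ => hFun_eq_right μ x (not_le.mpr hx)⟩
  constructor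
  · exact ⟨hFun μ, hcom, fun h' hh' => commuter_unique μ hμ0 hμ2 h' (hFun μ) hh' hcom⟩
  · exact fun h hh => commuter_commutes μ hμ0 hμ2 h hh
end

section
/- Let 1/2 < μ ≤ 1. For all x, y ∈ [0,1] with x < y, there exists a point x₀ with x < x₀ < y and an integer n ≥ 0 such that T_μⁿ(x₀) = 1/2 (where T_μⁿ denotes the n-th iterate of T_μ); that is, the set of eventual preimages of 1/2 under T_μ is dense in [0,1]. -/
open Set

lemma tent_key (μ : ℝ) (hμ1 : 1/2 < μ) (hμ2 : μ ≤ 1) :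
    ∀ n : ℕ, ∀ a b : ℝ, 0 ≤ a → b ≤ 1 → a < b → 1 < (2*μ)^n * (b - a) →
    ∃ x₀, a < x₀ ∧ x₀ < b ∧ ∃ m, (tentMap μ)^[m] x₀ = 1/2 := by
  intro n
  induction n with
  | zero =>
    intro a b ha hb hab h
    simp only [pow_zero, one_mul] at h
    linarith
  | succ n ih =>
    intro a b ha hb hab h
    have hμ0 : (0:ℝ) < 2*μ := by linarith
    rcases lt_or_ge a (1/2) with ha2 | ha2
    · rcases lt_or_ge (1/2) b with hb2 | hb2
      · exact ⟨1/2, ha2, hb2, 0, rfl⟩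
      · -- b ≤ 1/2 : interval in left half
        have heq : (2*μ)^n * (2*μ*b - 2*μ*a) = (2*μ)^(n+1) * (b-a) := by ring
        obtain ⟨x₀', h1, h2, m, hm⟩ := ih (2*μ*a) (2*μ*b)
          (by positivity) (by nlinarith) (by nlinarith) (by linarith)
        refine ⟨x₀' / (2*μ), ?_, ?_, m+1, ?_⟩
        · rw [lt_div_iff₀ hμ0]; linarith
        · rw [div_lt_iff₀ hμ0]; linarith
        · have hx1 : x₀' / (2*μ) ≤ 1/2 := by
            rw [div_le_iff₀ hμ0]; nlinarith
          have ht : tentMap μ (x₀' / (2*μ)) = x₀' := by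
            rw [tentMap, if_pos hx1]; field_simp
          rw [Function.iterate_succ_apply, ht, hm]
    · -- 1/2 ≤ a : interval in right half
      have heq : (2*μ)^n * (2*μ*(1-a) - 2*μ*(1-b)) = (2*μ)^(n+1) * (b-a) := by ring
      obtain ⟨x₀', h1, h2, m, hm⟩ := ih (2*μ*(1-b)) (2*μ*(1-a))
        (by nlinarith) (by nlinarith) (by nlinarith) (by linarith)
      refine ⟨1 - x₀' / (2*μ), ?_, ?_, m+1, ?_⟩
      · have : x₀' / (2*μ) < 1 - a := by rw [div_lt_iff₀ hμ0]; nlinarith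
        linarith
      · have : 1 - b < x₀' / (2*μ) := by rw [lt_div_iff₀ hμ0]; nlinarith
        linarith
      · have hgt : ¬ (1 - x₀' / (2*μ) ≤ 1/2) := by
          push_neg
          have : x₀' / (2*μ) < 1 - a := by rw [div_lt_iff₀ hμ0]; nlinarith
          linarith
        have ht : tentMap μ (1 - x₀' / (2*μ)) = x₀' := by
          rw [tentMap, if_neg hgt]; field_simp; ring
        rw [Function.iterate_succ_apply, ht, hm]

/-- For `1/2 < μ ≤ 1`, between any two points `x < y` of `[0,1]` there is a point `x₀`
with `T_μ^[n](x₀) = 1/2` for some `n ≥ 0`; i.e. the eventual preimages of `1/2` under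
`T_μ` are dense in `[0,1]`. -/
theorem dense_preimages_of_half (μ : ℝ) (hμ1 : 1/2 < μ) (hμ2 : μ ≤ 1)
    (x y : ℝ) (hx : x ∈ Icc (0:ℝ) 1) (hy : y ∈ Icc (0:ℝ) 1) (hxy : x < y) :
    ∃ x₀ : ℝ, x < x₀ ∧ x₀ < y ∧ ∃ n : ℕ, (tentMap μ)^[n] x₀ = 1/2 := by
  have h1 : (1:ℝ) < 2*μ := by linarith
  obtain ⟨n, hn⟩ := pow_unbounded_of_one_lt ((y-x)⁻¹) h1
  have hyx : 0 < y - x := by linarith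
  have hinv : (y-x)⁻¹ * (y-x) = 1 := inv_mul_cancel₀ (by linarith)
  have hbig : 1 < (2*μ)^n * (y-x) := by nlinarith [mul_lt_mul_of_pos_right hn hyx]
  exact tent_key μ hμ1 hμ2 n x y hx.1 hy.2 hxy hbig
end

section
/- Suppose 1/2 < μ ≤ 1 and π ∈ Allow(T_μ). Then π ∈ Allow(T); that is, every pattern realized by the tent map T_μ is also realized by the full tent map T = T_1. -/
open Set

/-- `Allows f p` means the permutation `p` of `{0, …, n-1}` is an allowed pattern of the
map `f` on `[0,1]`: there is `x ∈ [0,1]` whose orbit `x, f(x), …, f^[n-1](x)` is in the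
same relative order as `p 0, p 1, …, p (n-1)`. -/
def Allows (f : ℝ → ℝ) {n : ℕ} (p : Equiv.Perm (Fin n)) : Prop :=
  ∃ x ∈ Icc (0:ℝ) 1, ∀ i j : Fin n, p i < p j ↔ f^[(i:ℕ)] x < f^[(j:ℕ)] x

lemma tent_left {μ x : ℝ} (h : x ≤ 1/2) : tentMap μ x = 2*μ*x := if_pos h

lemma tent_right {μ x : ℝ} (h : ¬ x ≤ 1/2) : tentMap μ x = 2*μ*(1-x) := if_neg h

lemma tent_mem {μ : ℝ} (h1 : 0 < μ) (h2 : μ ≤ 1) {x : ℝ} (hx : x ∈ Icc (0:ℝ) 1) :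
    tentMap μ x ∈ Icc (0:ℝ) 1 := by
  obtain ⟨h0, hx1⟩ := hx
  by_cases h : x ≤ 1/2 <;> simp only [tentMap, h, if_true, if_false] <;>
    constructor <;> nlinarith

lemma tent_iter_mem {μ : ℝ} (h1 : 0 < μ) (h2 : μ ≤ 1) {x : ℝ} (hx : x ∈ Icc (0:ℝ) 1)
    (m : ℕ) : (tentMap μ)^[m] x ∈ Icc (0:ℝ) 1 := by
  induction m with
  | zero => simpa using hx
  | succ k ih => rw [Function.iterate_succ_apply']; exact tent_mem h1 h2 ih

/-- Order of two points is determined, simultaneously for two tent maps, by matching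
itineraries up to a time where the strict order of the iterates is known both ways. -/
lemma tent_compare (μ : ℝ) (hμ : 0 < μ) :
    ∀ (k : ℕ) (u v u' v' : ℝ),
    (∀ m < k, ((tentMap μ)^[m] u ≤ 1/2 ↔ (tentMap μ)^[m] v ≤ 1/2)
      ∧ ((tentMap μ)^[m] u ≤ 1/2 ↔ (tentMap 1)^[m] u' ≤ 1/2)
      ∧ ((tentMap μ)^[m] u ≤ 1/2 ↔ (tentMap 1)^[m] v' ≤ 1/2)) →
    (((tentMap μ)^[k] u < (tentMap μ)^[k] v ↔ (tentMap 1)^[k] u' < (tentMap 1)^[k] v')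
      ∧ ((tentMap μ)^[k] v < (tentMap μ)^[k] u ↔ (tentMap 1)^[k] v' < (tentMap 1)^[k] u')) →
    (u < v ↔ u' < v') := by
  intro k
  induction k with
  | zero =>
    intro u v u' v' _ hk
    simpa using hk.1
  | succ k ih =>
    intro u v u' v' hside hk
    have h0 := hside 0 (Nat.succ_pos k)
    simp only [Function.iterate_zero_apply] at h0
    obtain ⟨huv, huu', huv'⟩ := h0
    have hshift : ∀ m < k,
        ((tentMap μ)^[m] (tentMap μ u) ≤ 1/2 ↔ (tentMap μ)^[m] (tentMap μ v) ≤ 1/2)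
        ∧ ((tentMap μ)^[m] (tentMap μ u) ≤ 1/2 ↔ (tentMap 1)^[m] (tentMap 1 u') ≤ 1/2)
        ∧ ((tentMap μ)^[m] (tentMap μ u) ≤ 1/2 ↔ (tentMap 1)^[m] (tentMap 1 v') ≤ 1/2) := by
      intro m hm
      have := hside (m+1) (by omega)
      simpa only [Function.iterate_succ_apply] using this
    have hkk :
        (((tentMap μ)^[k] (tentMap μ u) < (tentMap μ)^[k] (tentMap μ v)
            ↔ (tentMap 1)^[k] (tentMap 1 u') < (tentMap 1)^[k] (tentMap 1 v'))
          ∧ ((tentMap μ)^[k] (tentMap μ v) < (tentMap μ)^[k] (tentMap μ u)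
            ↔ (tentMap 1)^[k] (tentMap 1 v') < (tentMap 1)^[k] (tentMap 1 u'))) := by
      simpa only [Function.iterate_succ_apply] using hk
    by_cases hb : u ≤ 1/2
    · have hv : v ≤ 1/2 := huv.mp hb
      have hu' : u' ≤ 1/2 := huu'.mp hb
      have hv' : v' ≤ 1/2 := huv'.mp hb
      have key := ih (tentMap μ u) (tentMap μ v) (tentMap 1 u') (tentMap 1 v') hshift hkk
      rw [tent_left hb, tent_left hv, tent_left hu', tent_left hv'] at key
      have l1 : u < v ↔ 2*μ*u < 2*μ*v := by constructor <;> intro <;> nlinarith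
      have l2 : u' < v' ↔ 2*1*u' < 2*1*v' := by constructor <;> intro <;> nlinarith
      rw [l1, l2]
      exact key
    · have hv : ¬ v ≤ 1/2 := fun h => hb (huv.mpr h)
      have hu' : ¬ u' ≤ 1/2 := fun h => hb (huu'.mpr h)
      have hv' : ¬ v' ≤ 1/2 := fun h => hb (huv'.mpr h)
      have hshift' : ∀ m < k,
          ((tentMap μ)^[m] (tentMap μ v) ≤ 1/2 ↔ (tentMap μ)^[m] (tentMap μ u) ≤ 1/2)
          ∧ ((tentMap μ)^[m] (tentMap μ v) ≤ 1/2 ↔ (tentMap 1)^[m] (tentMap 1 v') ≤ 1/2)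
          ∧ ((tentMap μ)^[m] (tentMap μ v) ≤ 1/2 ↔ (tentMap 1)^[m] (tentMap 1 u') ≤ 1/2) := by
        intro m hm
        obtain ⟨a, b, c⟩ := hshift m hm
        exact ⟨a.symm, a.symm.trans c, a.symm.trans b⟩
      have key := ih (tentMap μ v) (tentMap μ u) (tentMap 1 v') (tentMap 1 u') hshift'
        ⟨hkk.2, hkk.1⟩
      rw [tent_right hb, tent_right hv, tent_right hu', tent_right hv'] at key
      have l1 : u < v ↔ 2*μ*(1-v) < 2*μ*(1-u) := by constructor <;> intro <;> nlinarith
      have l2 : u' < v' ↔ 2*1*(1-v') < 2*1*(1-u') := by constructor <;> intro <;> nlinarith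
      rw [l1, l2]
      exact key

/-- Distinct points in `[0,1]` have itineraries (under `T_μ`, `μ > 1/2`) which
eventually disagree. -/
lemma tent_exists_side_ne {μ : ℝ} (hμ1 : 1/2 < μ) (hμ2 : μ ≤ 1) {u v : ℝ}
    (hu : u ∈ Icc (0:ℝ) 1) (hv : v ∈ Icc (0:ℝ) 1) (hne : u ≠ v) :
    ∃ k, ¬ ((tentMap μ)^[k] u ≤ 1/2 ↔ (tentMap μ)^[k] v ≤ 1/2) := by
  have hμ0 : 0 < μ := by linarith
  by_contra hcon
  push_neg at hcon
  have hcon' : ∀ k, ((tentMap μ)^[k] u ≤ 1/2 ↔ (tentMap μ)^[k] v ≤ 1/2) := by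
    intro k
    by_contra h
    exact h (hcon k)
  have hgrow : ∀ k, |(tentMap μ)^[k] u - (tentMap μ)^[k] v| = (2*μ)^k * |u - v| := by
    intro k
    induction k with
    | zero => simp
    | succ k ih =>
      have hside := hcon' k
      rw [Function.iterate_succ_apply', Function.iterate_succ_apply']
      by_cases h : (tentMap μ)^[k] u ≤ 1/2
      · have hb : (tentMap μ)^[k] v ≤ 1/2 := hside.mp h
        rw [tent_left h, tent_left hb,
          show 2*μ*(tentMap μ)^[k] u - 2*μ*(tentMap μ)^[k] v
              = (2*μ) * ((tentMap μ)^[k] u - (tentMap μ)^[k] v) by ring,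
          abs_mul, ih, abs_of_pos (by linarith : (0:ℝ) < 2*μ), pow_succ]
        ring
      · have hb : ¬ (tentMap μ)^[k] v ≤ 1/2 := fun hh => h (hside.mpr hh)
        rw [tent_right h, tent_right hb,
          show 2*μ*(1-(tentMap μ)^[k] u) - 2*μ*(1-(tentMap μ)^[k] v)
              = (2*μ) * ((tentMap μ)^[k] v - (tentMap μ)^[k] u) by ring,
          abs_mul, abs_sub_comm, ih, abs_of_pos (by linarith : (0:ℝ) < 2*μ), pow_succ]
        ring
  have hbound : ∀ k, |(tentMap μ)^[k] u - (tentMap μ)^[k] v| ≤ 1 := by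
    intro k
    obtain ⟨a1, a2⟩ := tent_iter_mem hμ0 hμ2 hu k
    obtain ⟨b1, b2⟩ := tent_iter_mem hμ0 hμ2 hv k
    rw [abs_le]
    constructor <;> linarith
  have habs : 0 < |u - v| := abs_pos.mpr (sub_ne_zero.mpr hne)
  obtain ⟨k, hk⟩ := pow_unbounded_of_one_lt (1/|u-v|) (show (1:ℝ) < 2*μ by linarith)
  have h1 : 1 < (2*μ)^k * |u - v| := by
    rw [div_lt_iff₀ habs] at hk
    linarith
  have := hbound k
  rw [hgrow k] at this
  linarith

/-- Backward orbit construction for the full tent map, following a prescribed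
itinerary `s` up to time `M`, landing on `2/5`. -/
noncomputable def buildZ (s : ℕ → Bool) (M : ℕ) : ℕ → ℝ
  | 0 => 2/5
  | j+1 => if s (M - j) then buildZ s M j / 2 else 1 - buildZ s M j / 2

noncomputable def buildY (s : ℕ → Bool) (M : ℕ) (i : ℕ) : ℝ := buildZ s M (M + 1 - i)

lemma buildZ_mem (s : ℕ → Bool) (M : ℕ) (j : ℕ) : buildZ s M j ∈ Ioo (0:ℝ) 1 := by
  induction j with
  | zero => norm_num [buildZ]
  | succ j ih =>
    obtain ⟨h1, h2⟩ := ih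
    cases h : s (M - j) <;> simp [buildZ, h] <;> constructor <;> linarith

lemma buildY_mem (s : ℕ → Bool) (M : ℕ) (i : ℕ) : buildY s M i ∈ Ioo (0:ℝ) 1 :=
  buildZ_mem s M _

lemma buildY_succ (s : ℕ → Bool) (M : ℕ) {i : ℕ} (hi : i ≤ M) :
    buildY s M i = if s i then buildY s M (i+1) / 2 else 1 - buildY s M (i+1) / 2 := by
  unfold buildY
  have e1 : M + 1 - i = (M - i) + 1 := by omega
  have e2 : M - (M - i) = i := by omega
  have e3 : M + 1 - (i + 1) = M - i := by omega
  rw [e1, e3]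
  simp only [buildZ, e2]

lemma buildY_side (s : ℕ → Bool) (M : ℕ) {i : ℕ} (hi : i ≤ M) :
    (buildY s M i ≤ 1/2 ↔ s i = true) := by
  obtain ⟨h1, h2⟩ := buildY_mem s M (i+1)
  rw [buildY_succ s M hi]
  cases h : s i
  · simp only [h, Bool.false_eq_true, if_false, iff_false, not_le]
    linarith
  · simp only [h, if_true, iff_true]
    linarith

lemma buildY_tent (s : ℕ → Bool) (M : ℕ) {i : ℕ} (hi : i ≤ M) :
    tentMap 1 (buildY s M i) = buildY s M (i+1) := by
  obtain ⟨h1, h2⟩ := buildY_mem s M (i+1)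
  rw [buildY_succ s M hi]
  cases h : s i
  · simp only [h, Bool.false_eq_true, if_false]
    rw [tent_right (by intro hh; linarith)]; ring
  · simp only [h, if_true]
    rw [tent_left (by linarith)]; ring

lemma buildY_iter (s : ℕ → Bool) (M : ℕ) {i m : ℕ} (him : i + m ≤ M + 1) :
    (tentMap 1)^[m] (buildY s M i) = buildY s M (i + m) := by
  induction m with
  | zero => simp
  | succ m ih =>
    rw [Function.iterate_succ_apply', ih (by omega),
      buildY_tent s M (show i + m ≤ M by omega)]
    ring_nf

/-- For `1/2 < μ ≤ 1`, every pattern allowed for `T_μ` is allowed for the full tent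
map `T = T_1`. -/
theorem allow_tentMap_subset (μ : ℝ) (hμ1 : 1/2 < μ) (hμ2 : μ ≤ 1)
    (n : ℕ) (p : Equiv.Perm (Fin n)) (hp : Allows (tentMap μ) p) :
    Allows (tentMap 1) p := by
  classical
  have hμ0 : 0 < μ := by linarith
  obtain ⟨x, hx, hord⟩ := hp
  have hmem : ∀ m, (tentMap μ)^[m] x ∈ Icc (0:ℝ) 1 := tent_iter_mem hμ0 hμ2 hx
  -- distinctness of the orbit
  have hdist : ∀ i j : Fin n, i ≠ j → (tentMap μ)^[(i:ℕ)] x ≠ (tentMap μ)^[(j:ℕ)] x := by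
    intro i j hij heq
    have h1 : ¬ p i < p j := by rw [hord i j, heq]; exact lt_irrefl _
    have h2 : ¬ p j < p i := by rw [hord j i, heq]; exact lt_irrefl _
    exact hij (p.injective (le_antisymm (not_lt.mp h2) (not_lt.mp h1)))
  -- itinerary of x
  set s : ℕ → Bool := fun m => if (tentMap μ)^[m] x ≤ 1/2 then true else false with hs_def
  have hs : ∀ m, (s m = true ↔ (tentMap μ)^[m] x ≤ 1/2) := by
    intro m
    by_cases h : (tentMap μ)^[m] x ≤ 1/2 <;> simp [hs_def, h]
  -- disagreement times for each pair
  have hkk : ∀ q : Fin n × Fin n, q.1 ≠ q.2 → ∃ k,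
      ¬ ((tentMap μ)^[k] ((tentMap μ)^[(q.1:ℕ)] x) ≤ 1/2
        ↔ (tentMap μ)^[k] ((tentMap μ)^[(q.2:ℕ)] x) ≤ 1/2) := by
    intro q hq
    exact tent_exists_side_ne hμ1 hμ2 (hmem _) (hmem _) (hdist _ _ hq)
  set kk : Fin n × Fin n → ℕ := fun q =>
    if h : q.1 ≠ q.2 then (hkk q h).choose else 0 with hkk_def
  set M : ℕ := n + Finset.univ.sup kk with hM_def
  set y : ℝ := buildY s M 0 with hy_def
  refine ⟨y, ⟨le_of_lt (buildY_mem s M 0).1, le_of_lt (buildY_mem s M 0).2⟩, ?_⟩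
  -- iterates of y follow the itinerary s
  have hyiter : ∀ m, m ≤ M + 1 → (tentMap 1)^[m] y = buildY s M m := by
    intro m hm
    have := buildY_iter s M (i := 0) (m := m) (by omega)
    simpa using this
  have hyside : ∀ m, m ≤ M → ((tentMap 1)^[m] y ≤ 1/2 ↔ s m = true) := by
    intro m hm
    rw [hyiter m (by omega)]
    exact buildY_side s M hm
  intro i j
  by_cases hij : i = j
  · subst hij; simp
  -- main comparison
  rw [hord i j]
  have hk0 : ∃ k, s ((i:ℕ) + k) ≠ s ((j:ℕ) + k) := by
    refine ⟨kk (i, j), ?_⟩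
    have h := (hkk (i, j) hij).choose_spec
    have hkkij : kk (i, j) = (hkk (i, j) hij).choose := by
      rw [hkk_def]; simp [hij]
    rw [hkkij]
    intro heq
    apply h
    rw [← Function.iterate_add_apply, ← Function.iterate_add_apply]
    constructor
    · intro hh
      have h1 : s ((hkk (i,j) hij).choose + (i:ℕ)) = true := (hs _).mpr hh
      rw [Nat.add_comm] at h1
      rw [heq] at h1
      rw [Nat.add_comm] at h1
      exact (hs _).mp h1
    · intro hh
      have h1 : s ((hkk (i,j) hij).choose + (j:ℕ)) = true := (hs _).mpr hh
      rw [Nat.add_comm] at h1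
      rw [← heq] at h1
      rw [Nat.add_comm] at h1
      exact (hs _).mp h1
  set k : ℕ := Nat.find hk0 with hk_def
  have hkspec : s ((i:ℕ) + k) ≠ s ((j:ℕ) + k) := Nat.find_spec hk0
  have hkmin : ∀ m < k, s ((i:ℕ) + m) = s ((j:ℕ) + m) := by
    intro m hm
    by_contra h
    exact Nat.find_min hk0 hm h
  have hkle : k ≤ kk (i, j) := Nat.find_min' hk0 (by
    have h := (hkk (i, j) hij).choose_spec
    have hkkij : kk (i, j) = (hkk (i, j) hij).choose := by
      rw [hkk_def]; simp [hij]
    rw [hkkij]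
    intro heq
    apply h
    rw [← Function.iterate_add_apply, ← Function.iterate_add_apply]
    constructor
    · intro hh
      have h1 : s ((hkk (i,j) hij).choose + (i:ℕ)) = true := (hs _).mpr hh
      rw [Nat.add_comm] at h1
      rw [heq] at h1
      rw [Nat.add_comm] at h1
      exact (hs _).mp h1
    · intro hh
      have h1 : s ((hkk (i,j) hij).choose + (j:ℕ)) = true := (hs _).mpr hh
      rw [Nat.add_comm] at h1
      rw [← heq] at h1
      rw [Nat.add_comm] at h1
      exact (hs _).mp h1)
  have hkkle : kk (i, j) ≤ Finset.univ.sup kk := Finset.le_sup (Finset.mem_univ _)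
  have hiM : (i:ℕ) + k ≤ M := by
    have : (i:ℕ) < n := i.isLt
    omega
  have hjM : (j:ℕ) + k ≤ M := by
    have : (j:ℕ) < n := j.isLt
    omega
  -- sides of all orbit points
  have hsideμ : ∀ a m : ℕ, ((tentMap μ)^[m] ((tentMap μ)^[a] x) ≤ 1/2 ↔ s (a + m) = true) := by
    intro a m
    rw [← Function.iterate_add_apply, Nat.add_comm m a]
    exact (hs _).symm
  have hside1 : ∀ a m : ℕ, a + m ≤ M →
      ((tentMap 1)^[m] ((tentMap 1)^[a] y) ≤ 1/2 ↔ s (a + m) = true) := by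
    intro a m ham
    rw [← Function.iterate_add_apply, Nat.add_comm m a]
    exact hyside _ ham
  -- apply comparison lemma
  have hcmp := tent_compare μ hμ0 k ((tentMap μ)^[(i:ℕ)] x) ((tentMap μ)^[(j:ℕ)] x)
    ((tentMap 1)^[(i:ℕ)] y) ((tentMap 1)^[(j:ℕ)] y) ?_ ?_
  · exact hcmp
  · intro m hm
    have hmlt := hkmin m hm
    have hi' : (i:ℕ) + m ≤ M := by omega
    have hj' : (j:ℕ) + m ≤ M := by omega
    refine ⟨?_, ?_, ?_⟩
    · rw [hsideμ (i:ℕ) m, hsideμ (j:ℕ) m, hmlt]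
    · rw [hsideμ (i:ℕ) m, hside1 (i:ℕ) m hi']
    · rw [hsideμ (i:ℕ) m, hside1 (j:ℕ) m hj', hmlt]
  · -- strict order at time k, known both ways
    have hμi := hsideμ (i:ℕ) k
    have hμj := hsideμ (j:ℕ) k
    have h1i := hside1 (i:ℕ) k hiM
    have h1j := hside1 (j:ℕ) k hjM
    by_cases hsik : s ((i:ℕ) + k) = true
    · have hsjk : s ((j:ℕ) + k) ≠ true := fun h => hkspec (hsik.trans h.symm)
      have a1 : (tentMap μ)^[k] ((tentMap μ)^[(i:ℕ)] x) ≤ 1/2 := hμi.mpr hsik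
      have a2 : ¬ (tentMap μ)^[k] ((tentMap μ)^[(j:ℕ)] x) ≤ 1/2 := fun h => hsjk (hμj.mp h)
      have b1 : (tentMap 1)^[k] ((tentMap 1)^[(i:ℕ)] y) ≤ 1/2 := h1i.mpr hsik
      have b2 : ¬ (tentMap 1)^[k] ((tentMap 1)^[(j:ℕ)] y) ≤ 1/2 := fun h => hsjk (h1j.mp h)
      push_neg at a2 b2
      constructor
      · constructor <;> intro <;> linarith
      · constructor <;> intro <;> linarith
    · have hsjk : s ((j:ℕ) + k) = true := by
        cases hjv : s ((j:ℕ) + k) with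
        | true => rfl
        | false =>
          exfalso
          apply hkspec
          cases hiv : s ((i:ℕ) + k) with
          | true => exact absurd hiv hsik
          | false => rw [hjv]
      have a1 : (tentMap μ)^[k] ((tentMap μ)^[(j:ℕ)] x) ≤ 1/2 := hμj.mpr hsjk
      have a2 : ¬ (tentMap μ)^[k] ((tentMap μ)^[(i:ℕ)] x) ≤ 1/2 := fun h => hsik (hμi.mp h)
      have b1 : (tentMap 1)^[k] ((tentMap 1)^[(j:ℕ)] y) ≤ 1/2 := h1j.mpr hsjk
      have b2 : ¬ (tentMap 1)^[k] ((tentMap 1)^[(i:ℕ)] y) ≤ 1/2 := fun h => hsik (h1i.mp h)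
      push_neg at a2 b2
      constructor
      · constructor <;> intro <;> linarith
      · constructor <;> intro <;> linarith
end

section
/- Fix an integer n ≥ 3. If x ∈ [0,1] is such that the points x, T(x), …, T^{n−1}(x) are pairwise distinct and Pat(x, T, n) = σ_n, then x lies in the open interval ( 2^{n−2}/(2^{n−1}+1) , 2^{n−2}/(2^{n−1}−1) ); that is, the pattern σ_n is realized by the full tent map T only on this interval. -/
open Set

/-- The permutation σ_n = (n-1) n 1 2 ⋯ (n-2) (one-line notation, 1-indexed), i.e. in
0-indexed terms the map `i ↦ i + (n-2) (mod n)` on `Fin n`. -/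
def sigmaPerm (n : ℕ) : Equiv.Perm (Fin n) := finRotate n ^ (n - 2)

lemma finRotate_pow_val {n : ℕ} (hn : 1 ≤ n) (k : ℕ) (i : Fin n) :
    (((finRotate n ^ k) i : Fin n) : ℕ) = ((i : ℕ) + k) % n := by
  obtain ⟨m, rfl⟩ : ∃ m, n = m + 1 := ⟨n - 1, by omega⟩
  induction k with
  | zero => simp [Nat.mod_eq_of_lt i.isLt]
  | succ k ih =>
    rw [pow_succ', Equiv.Perm.mul_apply, finRotate_succ_apply, Fin.val_add, ih,
      Fin.val_one', ← Nat.add_mod, ← Nat.add_assoc]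

lemma sigma_val {n : ℕ} (hn : 1 ≤ n) (i : Fin n) :
    ((sigmaPerm n i : Fin n) : ℕ) = ((i : ℕ) + (n - 2)) % n :=
  finRotate_pow_val hn _ i

/-- For `n ≥ 3`, the pattern `σ_n = (n-1) n 1 2 ⋯ (n-2)` is realized by the full tent map
`T = T_1` only on the interval `(2^(n-2)/(2^(n-1)+1), 2^(n-2)/(2^(n-1)-1))`. -/
theorem pattern_only_near_half (n : ℕ) (hn : 3 ≤ n) (x : ℝ) (hx : x ∈ Icc (0:ℝ) 1)
    (hdist : ∀ i j : Fin n, i ≠ j → (tentMap 1)^[(i:ℕ)] x ≠ (tentMap 1)^[(j:ℕ)] x)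
    (hpat : ∀ i j : Fin n, sigmaPerm n i < sigmaPerm n j ↔
      (tentMap 1)^[(i:ℕ)] x < (tentMap 1)^[(j:ℕ)] x) :
    x ∈ Ioo ((2:ℝ)^(n-2)/((2:ℝ)^(n-1)+1)) ((2:ℝ)^(n-2)/((2:ℝ)^(n-1)-1)) := by
  obtain ⟨N, rfl⟩ : ∃ N, n = N + 3 := ⟨n - 3, by omega⟩
  set y : ℕ → ℝ := fun i => (tentMap 1)^[i] x with hy
  have key : ∀ a b : ℕ, ∀ ha : a < N + 3, ∀ hb : b < N + 3,
      (a + (N + 1)) % (N + 3) < (b + (N + 1)) % (N + 3) → y a < y b := by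
    intro a b ha hb h
    have := (hpat ⟨a, ha⟩ ⟨b, hb⟩).mp
    apply this
    rw [Fin.lt_def, sigma_val (by omega), sigma_val (by omega)]
    simpa using h
  have y0 : y 0 = x := rfl
  -- x < T x
  have h01 : x < y 1 := by
    rw [← y0]
    apply key 0 1 (by omega) (by omega)
    rw [Nat.mod_eq_of_lt (by omega), Nat.mod_eq_of_lt (by omega)]
    omega
  -- intermediate points below x
  have hlt : ∀ i, 2 ≤ i → i < N + 3 → y i < x := by
    intro i h2 hi
    rw [← y0]
    apply key i 0 hi (by omega)
    have e1 : i + (N + 1) = (i - 2) + (N + 3) := by omega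
    rw [e1, Nat.add_mod_right, Nat.mod_eq_of_lt (by omega), Nat.mod_eq_of_lt (by omega)]
    omega
  have hmem : ∀ i, y i ∈ Icc (0:ℝ) 1 := by
    intro i
    induction i with
    | zero => exact hx
    | succ i ih =>
      have : y (i + 1) = tentMap 1 (y i) := Function.iterate_succ_apply' _ _ _
      rw [this]
      obtain ⟨h0, h1⟩ := ih
      unfold tentMap
      split_ifs with h <;> constructor <;> linarith
  have ysucc : ∀ i, y (i + 1) = tentMap 1 (y i) := fun i =>
    Function.iterate_succ_apply' _ _ _
  -- intermediate points are ≤ 1/2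
  have hhalf : ∀ i, 2 ≤ i → i ≤ N + 1 → y i ≤ 1/2 := by
    intro i h2 hi
    by_contra h
    push_neg at h
    have hyi : y i < x := hlt i h2 (by omega)
    have hyi1 : y (i + 1) < x := hlt (i + 1) (by omega) (by omega)
    have e : y (i + 1) = 2 * (1 - y i) := by
      rw [ysucc i]; unfold tentMap; rw [if_neg (by linarith)]; ring
    have hx23 : 2/3 < x := by linarith
    have e1 : y 1 = 2 * (1 - x) := by
      rw [ysucc 0, y0]; unfold tentMap; rw [if_neg (by linarith)]; ring
    linarith
  -- doubling chain
  have chain : ∀ k, k ≤ N → y (2 + k) = 2^k * y 2 := by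
    intro k hk
    induction k with
    | zero => simp
    | succ k ih =>
      have hk' : k ≤ N := by omega
      have h2k : y (2 + k) ≤ 1/2 := hhalf (2 + k) (by omega) (by omega)
      have : y (2 + (k + 1)) = tentMap 1 (y (2 + k)) := by
        rw [show 2 + (k + 1) = (2 + k) + 1 by ring, ysucc]
      rw [this]
      unfold tentMap
      rw [if_pos h2k, ih hk']
      ring
  have hend : y (N + 2) = 2^N * y 2 := by
    have := chain N le_rfl
    rwa [show 2 + N = N + 2 by ring] at this
  have hendlt : y (N + 2) < x := hlt (N + 2) (by omega) (by omega)
  have hp : (0:ℝ) < 2^N := by positivity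
  have hp1 : (1:ℝ) ≤ 2^N := one_le_pow₀ (by norm_num)
  have e1 : (2:ℝ)^(N + 3 - 2) = 2 * 2^N := by
    rw [show N + 3 - 2 = N + 1 by omega, pow_succ]; ring
  have e2 : (2:ℝ)^(N + 3 - 1) = 4 * 2^N := by
    rw [show N + 3 - 1 = N + 2 by omega, pow_succ, pow_succ]; ring
  rw [e1, e2]
  constructor
  · -- lower bound
    rw [div_lt_iff₀ (by linarith)]
    rcases le_or_gt x (1/2) with hxh | hxh
    · -- x ≤ 1/2 : y1 = 2x, y1 > 1/2, y2 = 2 - 4x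
      have ey1 : y 1 = 2 * x := by
        rw [ysucc 0, y0]; unfold tentMap; rw [if_pos hxh]; ring
      have hx0 : 0 < x := by linarith [h01, ey1]
      have hy1half : 1/2 < y 1 := by
        by_contra h
        push_neg at h
        have ey2 : y 2 = 2 * y 1 := by
          rw [ysucc 1]; unfold tentMap; rw [if_pos h]; ring
        have := hlt 2 le_rfl (by omega)
        rw [ey2, ey1] at this
        linarith
      have ey2 : y 2 = 2 - 4 * x := by
        rw [ysucc 1]; unfold tentMap; rw [if_neg (by linarith), ey1]; ring
      rw [hend, ey2] at hendlt
      nlinarith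
    · -- x > 1/2 : trivial, bound is < 1/2
      nlinarith [mul_lt_mul_of_pos_right hxh (show (0:ℝ) < 4*2^N+1 by linarith)]
  · -- upper bound
    rw [lt_div_iff₀ (by nlinarith)]
    rcases le_or_gt x (1/2) with hxh | hxh
    · -- x ≤ 1/2 : trivial, bound is > 1/2
      nlinarith [mul_le_mul_of_nonneg_right hxh (show (0:ℝ) ≤ 4*2^N-1 by linarith)]
    · -- x > 1/2 : y1 = 2-2x, y2 = 4x - 2
      have ey1 : y 1 = 2 * (1 - x) := by
        rw [ysucc 0, y0]; unfold tentMap; rw [if_neg (by linarith)]; ring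
      have hy1half : 1/2 < y 1 := by linarith
      have ey2 : y 2 = 4 * x - 2 := by
        rw [ysucc 1]; unfold tentMap; rw [if_neg (by linarith), ey1]; ring
      rw [hend, ey2] at hendlt
      nlinarith
end

section
/- Fix an integer n > 5 and let μ satisfy 1/2 < μ ≤ 1. If μ < 3/4 + (1/4)·√( 9 − (2^{n+2} + 8)/(2^{n−1} − 1) ), then the tent map T_μ avoids the pattern σ_n = (n−1) n 1 2 3 ⋯ (n−2); that is, σ_n ∉ Allow(T_μ). -/
open Set

open Fin.NatCast Fin.CommRing in
/-- Powers of `finRotate` act by translation. -/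
lemma finRotate_pow_apply (M k : ℕ) : ∀ i : Fin (M+1),
    ((finRotate (M+1))^k) i = i + ((k : ℕ) : Fin (M+1)) := by
  induction k with
  | zero => intro i; simp
  | succ k ih =>
      intro i
      rw [pow_succ, Equiv.Perm.mul_apply, finRotate_succ_apply, ih (i+1)]
      push_cast
      ring

/-- Lower bound for geometric sums with ratio `≤ 2`. -/
lemma geom_lb (t : ℝ) (ht0 : 0 ≤ t) (ht2 : t ≤ 2) (M : ℕ) :
    t^M * (2^(M+1) - 1) ≤ 2^M * ∑ k ∈ Finset.range (M+1), t^k := by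
  induction M with
  | zero => norm_num
  | succ M ih =>
      rw [Finset.sum_range_succ]
      have h1 : (0:ℝ) ≤ t^M := pow_nonneg ht0 M
      have h2 : t^(M+1) ≤ 2 * t^M := by
        rw [pow_succ]; nlinarith
      have h5 : (1:ℝ) ≤ 2^(M+1) := one_le_pow₀ (by norm_num)
      have h4 : (0:ℝ) ≤ (2^(M+1) - 1) * (2*t^M - t^(M+1)) :=
        mul_nonneg (by linarith) (by linarith)
      have e1 : (2:ℝ)^(M+1+1) = 2^(M+1)*2 := pow_succ 2 (M+1)
      have e2 : (2:ℝ)^(M+1) = 2^M*2 := pow_succ 2 M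
      rw [e1, e2]
      rw [e2] at h4
      nlinarith [ih, h4]

/-- Analytic lemma: if `1 < t ≤ 2` and `t < 2 - 1/2^m` then `t^(m+1) * (2-t) > 1`. -/
lemma ana_lemma (m : ℕ) (t : ℝ) (ht1 : 1 < t) (ht2 : t ≤ 2)
    (htb : t < 2 - 1/2^m) : 1 < t^(m+1) * (2-t) := by
  set S : ℝ := ∑ k ∈ Finset.range (m+1), t^k with hS
  have hgl := geom_lb t (by linarith) ht2 m
  have h2m : (0:ℝ) < 2^m := by positivity
  have htm : (0:ℝ) < t^m := by positivity
  -- S ≥ t^m * (2 - 1/2^m)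
  have h2mne : (2:ℝ)^m ≠ 0 := ne_of_gt h2m
  have hSlb : t^m * (2 - 1/2^m) ≤ S := by
    refine le_of_mul_le_mul_right ?_ h2m
    have e : t^m * (2 - 1/2^m) * 2^m = t^m * (2^(m+1) - 1) := by
      rw [pow_succ]
      field_simp
    rw [e]
    linarith [hgl]
  have hlt : t^(m+1) < S := by
    have : t^(m+1) < t^m * (2 - 1/2^m) := by
      rw [pow_succ]
      have := mul_lt_mul_of_pos_left htb htm
      linarith
    linarith
  have hgs := geom_sum_mul t (m+1)
  rw [← hS] at hgs
  have hkey : (0:ℝ) < (t - 1) * (S - t^(m+1)) :=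
    mul_pos (by linarith) (by linarith)
  nlinarith [hkey, hgs]

open Fin.NatCast in
set_option maxHeartbeats 2000000 in
/-- For `n > 5` and `1/2 < μ ≤ 1`: if `μ < 3/4 + (1/4)√(9 - (2^(n+2)+8)/(2^(n-1)-1))`,
then `T_μ` avoids the pattern `σ_n = (n-1) n 1 2 ⋯ (n-2)`. -/
theorem tentMap_avoids_sigma_of_mu_bound (n : ℕ) (hn : 5 < n)
    (μ : ℝ) (hμ1 : 1/2 < μ) (hμ2 : μ ≤ 1)
    (hb : μ < 3/4 + (1/4) * Real.sqrt (9 - ((2:ℝ)^(n+2) + 8)/((2:ℝ)^(n-1) - 1))) :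
    ¬ Allows (tentMap μ) (sigmaPerm n) := by
  obtain ⟨m, rfl⟩ : ∃ m, n = m + 3 := ⟨n - 3, by omega⟩
  have hm : 3 ≤ m := by omega
  rintro ⟨x, hx, h⟩
  set t : ℝ := 2*μ with ht_def
  have ht1 : 1 < t := by rw [ht_def]; linarith
  have ht2 : t ≤ 2 := by rw [ht_def]; linarith
  have htpos : 0 < t := by linarith
  -- Step 1 : the bound implies t < 2 - 8/2^(m+3) = 2 - 1/2^m
  have hP : (64:ℝ) ≤ 2^(m+3) := by
    calc (64:ℝ) = 2^6 := by norm_num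
    _ ≤ 2^(m+3) := by
        apply pow_le_pow_right₀ (by norm_num); omega
  have htb : t < 2 - 1/2^m := by
    set P : ℝ := 2^(m+3) with hPdef
    clear_value P
    have hPm : P = 2^m * 8 := by rw [hPdef, pow_add]; norm_num
    have hP0 : (0:ℝ) < P := by linarith
    have h1 : ((2:ℝ)^(m+3+2) + 8)/((2:ℝ)^(m+3-1) - 1) = (4*P + 8)/(P/2 - 1) := by
      have e1 : (2:ℝ)^(m+3+2) = 4*P := by rw [hPdef, show m+3+2 = (m+3)+2 from rfl, pow_add]; ring
      have e2 : (2:ℝ)^(m+3-1) = P/2 := by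
        rw [hPdef, show m+3 = (m+2)+1 from rfl, pow_succ, show (m+2)+1-1 = m+2 from rfl]
        ring
      rw [e1, e2]
    rw [h1] at hb
    have hsq : Real.sqrt (9 - (4*P + 8)/(P/2 - 1)) ≤ 1 - 16/P := by
      have h16 : (0:ℝ) ≤ 1 - 16/P := by
        rw [sub_nonneg, div_le_one hP0]; linarith
      have hE : 9 - (4*P + 8)/(P/2 - 1) ≤ (1 - 16/P)^2 := by
        have hden : (0:ℝ) < P/2 - 1 := by linarith
        have hPne : P ≠ 0 := ne_of_gt hP0
        have h1 : (8 + 32/P - 256/P^2) * (P/2 - 1) ≤ 4*P + 8 := by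
          have e : (8 + 32/P - 256/P^2) * (P/2 - 1)
              = 4*P + 8 - (160*P - 256)/P^2 := by
            field_simp
            ring
          rw [e]
          have : (0:ℝ) ≤ (160*P - 256)/P^2 :=
            div_nonneg (by linarith) (by positivity)
          linarith
        have h2 : 8 + 32/P - 256/P^2 ≤ (4*P + 8)/(P/2 - 1) :=
          (le_div_iff₀ hden).mpr h1
        have h3 : (1 - 16/P)^2 = 1 - 32/P + 256/P^2 := by
          field_simp
          ring
        rw [h3]
        linarith
      calc Real.sqrt (9 - (4*P + 8)/(P/2 - 1)) ≤ Real.sqrt ((1 - 16/P)^2) :=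
            Real.sqrt_le_sqrt hE
        _ = 1 - 16/P := Real.sqrt_sq h16
    have h8 : (1:ℝ)/2^m = 8/P := by rw [hPm]; ring
    rw [show (16:ℝ)/P = 2*(8/P) by ring] at hsq
    rw [h8, ht_def]
    linarith [hb, hsq]
  -- analytic inequality
  have hana : 1 < t^(m+1) * (2-t) := ana_lemma m t ht1 ht2 htb
  -- Step 2 : orbit analysis
  set T := tentMap μ with hT_def
  set y : ℕ → ℝ := fun k => T^[k] x with hy_def
  have hy : ∀ k, y (k+1) = T (y k) := fun k => Function.iterate_succ_apply' T k x
  have tentL : ∀ z : ℝ, z ≤ 1/2 → T z = t*z := by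
    intro z hz; rw [hT_def, tentMap, if_pos hz, ht_def]
  have tentR : ∀ z : ℝ, 1/2 < z → T z = t*(1-z) := by
    intro z hz; rw [hT_def, tentMap, if_neg (by linarith), ht_def]
  have hmemT : ∀ z ∈ Icc (0:ℝ) 1, T z ∈ Icc (0:ℝ) 1 := by
    intro z hz
    obtain ⟨hz0, hz1⟩ := hz
    by_cases hc : z ≤ 1/2
    · rw [tentL z hc]; constructor <;> nlinarith
    · rw [tentR z (by linarith)]; constructor <;> nlinarith
  have hbdT : ∀ z ∈ Icc (0:ℝ) 1, T z ≤ μ := by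
    intro z hz
    obtain ⟨hz0, hz1⟩ := hz
    by_cases hc : z ≤ 1/2
    · rw [tentL z hc, ht_def]; nlinarith
    · rw [tentR z (by linarith), ht_def]; nlinarith
  have hymem : ∀ k, y k ∈ Icc (0:ℝ) 1 := by
    intro k
    induction k with
    | zero => exact hx
    | succ k ih => rw [hy k]; exact hmemT _ ih
  -- ranks of sigmaPerm
  haveI : NeZero (m+3) := ⟨by omega⟩
  have hval : ∀ i : Fin (m+3), ((sigmaPerm (m+3)) i).val = (i.val + (m+1)) % (m+3) := by
    intro i
    have e : sigmaPerm (m+3) i = i + (((m+1 : ℕ)) : Fin (m+3)) := by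
      rw [sigmaPerm, show m+3-2 = m+1 from rfl]
      exact finRotate_pow_apply (m+2) (m+1) i
    rw [e, Fin.add_def]
    simp only [Fin.val_natCast]
    rw [Nat.mod_eq_of_lt (show m+1 < m+3 by omega)]
  have hord : ∀ i j : ℕ, i < m+3 → j < m+3 →
      (i + (m+1)) % (m+3) < (j + (m+1)) % (m+3) → y i < y j := by
    intro i j hi hj hlt
    have := (h ⟨i, hi⟩ ⟨j, hj⟩).mp (by rw [Fin.lt_def, hval, hval]; exact hlt)
    exact this
  have hmod : ∀ a : ℕ, 2 ≤ a → a < m+3 → (a + (m+1)) % (m+3) = a - 2 := by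
    intro a h1 h2
    rw [Nat.mod_eq_sub_mod (by omega)]
    have e : a + (m+1) - (m+3) = a - 2 := by omega
    rw [e, Nat.mod_eq_of_lt (by omega)]
  have hmod0 : (0 + (m+1)) % (m+3) = m+1 := by
    rw [Nat.mod_eq_of_lt (by omega)]; omega
  have hmod1 : (1 + (m+1)) % (m+3) = m+2 := by
    rw [Nat.mod_eq_of_lt (by omega)]; omega
  -- specific order facts
  have ho21 : y 2 < y 1 := by
    refine hord 2 1 (by omega) (by omega) ?_
    rw [hmod 2 (by omega) (by omega), hmod1]; omega
  have ho01 : y 0 < y 1 := by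
    refine hord 0 1 (by omega) (by omega) ?_
    rw [hmod0, hmod1]; omega
  have hoij : ∀ i j : ℕ, 2 ≤ i → i < j → j < m+3 → y i < y j := by
    intro i j h1 h2 h3
    refine hord i j (by omega) h3 ?_
    rw [hmod i h1 (by omega), hmod j (by omega) h3]; omega
  have hoi0 : ∀ i : ℕ, 2 ≤ i → i < m+3 → y i < y 0 := by
    intro i h1 h2
    refine hord i 0 h2 (by omega) ?_
    rw [hmod i h1 h2, hmod0]; omega
  have hoi1 : ∀ i : ℕ, 2 ≤ i → i < m+3 → y i < y 1 := by
    intro i h1 h2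
    refine hord i 1 h2 (by omega) ?_
    rw [hmod i h1 h2, hmod1]; omega
  -- basic dynamics facts
  have hy1pos : 0 < y 1 := lt_of_le_of_lt (hymem 2).1 ho21
  have hc : 1/2 < y 1 := by
    by_contra hcon
    push_neg at hcon
    have h2 : y 2 = t * y 1 := by rw [hy 1, tentL _ hcon]
    nlinarith [ho21]
  have hy2eq : y 2 = t * (1 - y 1) := by rw [hy 1, tentR _ hc]
  have hcμ : y 1 ≤ t/2 := by
    have := hbdT (y 0) (hymem 0)
    rw [← hy 0] at this
    rw [ht_def]; linarith
  clear_value y T t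
  -- chain lemma
  have chain : (∀ i, 2 ≤ i → i ≤ m+1 → y i ≤ 1/2) → y (m+2) = t^m * y 2 := by
    intro hall
    have key : ∀ k, k ≤ m → y (k+2) = t^k * y 2 := by
      intro k hk
      induction k with
      | zero => simp
      | succ k ih =>
          have h1 : y (k+2) ≤ 1/2 := hall (k+2) (by omega) (by omega)
          rw [show k+1+2 = (k+2)+1 from rfl, hy (k+2), tentL _ h1, ih (by omega), pow_succ]
          ring
    exact key m le_rfl
  have htm : (0:ℝ) < t^m := by positivity
  by_cases hsm : y (m+2) ≤ 1/2
  · -- Case I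
    have hall : ∀ i, 2 ≤ i → i ≤ m+1 → y i ≤ 1/2 := by
      intro i h1 h2
      exact le_of_lt (lt_of_lt_of_le (hoij i (m+2) h1 (by omega) (by omega)) hsm)
    have hch := chain hall
    have hy2lb : t * (1 - t/2) ≤ y 2 := by
      rw [hy2eq]; nlinarith
    have hkey : t^m * (t * (1 - t/2)) ≤ 1/2 := by
      calc t^m * (t * (1 - t/2)) ≤ t^m * y 2 :=
            mul_le_mul_of_nonneg_left hy2lb (le_of_lt htm)
        _ = y (m+2) := hch.symm
        _ ≤ 1/2 := hsm
    rw [pow_succ] at hana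
    nlinarith [hkey, hana]
  · -- Case II
    push_neg at hsm
    have hb0 : 1/2 < y 0 := hsm.trans (hoi0 (m+2) (by omega) (by omega))
    have hc_eq : y 1 = t * (1 - y 0) := by rw [hy 0, tentR _ hb0]
    have hall : ∀ i, 2 ≤ i → i ≤ m+1 → y i ≤ 1/2 := by
      intro i h1 h2
      by_contra hgt
      push_neg at hgt
      have hyi1 : y (i+1) = t * (1 - y i) := by rw [hy i, tentR _ hgt]
      have hi0 : y i < y 0 := hoi0 i h1 (by omega)
      have hi1 : y (i+1) < y 1 := hoi1 (i+1) (by omega) (by omega)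
      rw [hyi1, hc_eq] at hi1
      nlinarith
    have hch := chain hall
    obtain ⟨s, hs_def⟩ : ∃ s : ℝ, s = 1 - y 1 := ⟨_, rfl⟩
    obtain ⟨A, hA_def⟩ : ∃ A : ℝ, A = t^(m+1) := ⟨_, rfl⟩
    have hApos : 0 < A := by rw [hA_def]; positivity
    have hAeq : t^m * t = A := by rw [hA_def, pow_succ]
    have hi : 1 < 2*A*s := by
      have : 1/2 < t^m * (t * s) := by
        rw [hs_def]; rw [← hy2eq, ← hch]; exact hsm
      nlinarith [this]
    have hspos : 0 < s := by
      by_contra hcon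
      push_neg at hcon
      nlinarith [mul_nonneg hApos.le (neg_nonneg.mpr hcon)]
    have hii : A*t*s < t - 1 + s := by
      have h1 : t^m * (t*s) < y 0 := by
        rw [hs_def]; rw [← hy2eq, ← hch]; exact hoi0 (m+2) (by omega) (by omega)
      have h2 : t * y 0 = t - y 1 := by rw [hc_eq]; ring
      have h3 : t * (t^m * (t*s)) < t * y 0 := by
        exact mul_lt_mul_of_pos_left h1 htpos
      rw [h2] at h3
      have h4 : t * (t^m * (t*s)) = A*t*s := by rw [← hAeq]; ring
      rw [h4] at h3
      linarith [h3, hs_def.le, hs_def.ge]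
    have hiii : 1 < A*(2-t) := by rw [hA_def]; exact hana
    -- derive contradiction
    have hAt1 : 1 < A*t := by nlinarith
    have k1 : t - 1 < s*(2*A*(t-1)) := by nlinarith [hi]
    have k2 : s*(A*t - 1) < t - 1 := by nlinarith [hii]
    have k3 : A*t - 1 < 2*A*(t-1) :=
      lt_of_mul_lt_mul_left (by linarith [k1, k2]) (le_of_lt hspos)
    nlinarith [k3, hiii]
end
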